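/- For κ > 0, the integral ∫_0^∞ ∫_{|z|>1} min(|z| y^{κ-1} e^{-y}, 1) λ(dz) dy is finite if and only if ∫_{|z|>1} log|z| λ(dz) < ∞, for any Lévy measure λ (i.e. σ-finite measure on ℝ\{0} with ∫ min(1,z²) λ(dz) < ∞). -/

import Mathlib

open MeasureTheory Set Filter
open scoped ENNReal

namespace Stmt14Aux

lemma tail_integral (T : ℝ) :
    ∫⁻ y in Set.Ioi T, ENNReal.ofReal (Real.exp (-(1/2) * y)) =
      ENNReal.ofReal (2 * Real.exp (-(1/2) * T)) := by
  have hint : MeasureTheory.IntegrableOn (fun y : ℝ => Real.exp (-(1/2) * y)) (Set.Ioi T) :=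
    exp_neg_integrableOn_Ioi T (by norm_num)
  rw [← MeasureTheory.ofReal_integral_eq_lintegral_ofReal hint
    (Filter.Eventually.of_forall fun y => Real.exp_nonneg _)]
  congr 1
  have hderiv : ∀ x ∈ Set.Ici T,
      HasDerivAt (fun y : ℝ => -2 * Real.exp (-(1/2) * y)) (Real.exp (-(1/2) * x)) x := by
    intro x _
    have h1 : HasDerivAt (fun y : ℝ => -(1/2) * y) (-(1/2)) x := by
      simpa using (hasDerivAt_id x).const_mul (-(1/2) : ℝ)
    have h2 := (Real.hasDerivAt_exp (-(1/2) * x)).comp x h1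
    have h3 := h2.const_mul (-2 : ℝ)
    have h4 : (-2 * (Real.exp (-(1/2) * x) * -(1/2))) = Real.exp (-(1/2) * x) := by ring
    rw [h4] at h3
    exact h3
  have htend : Filter.Tendsto (fun y : ℝ => -2 * Real.exp (-(1/2) * y)) Filter.atTop (nhds 0) := by
    have h1 : Filter.Tendsto (fun y : ℝ => -(1/2) * y) Filter.atTop Filter.atBot :=
      (Filter.tendsto_const_mul_atBot_of_neg (by norm_num : (-(1/2) : ℝ) < 0)).2
        Filter.tendsto_id
    have h2 : Filter.Tendsto (fun y : ℝ => Real.exp (-(1/2) * y)) Filter.atTop (nhds 0) :=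
      Real.tendsto_exp_atBot.comp h1
    have := h2.const_mul (-2 : ℝ)
    simpa using this
  have := integral_Ioi_of_hasDerivAt_of_tendsto' hderiv hint htend
  rw [this]
  ring

lemma inner_lower (κ : ℝ) (hκ : 0 < κ) {a : ℝ} (ha : 1 < a) :
    ENNReal.ofReal (Real.log a / 2 - 1) ≤
      ∫⁻ y in Set.Ioi (0:ℝ), ENNReal.ofReal (min (a * y ^ (κ - 1) * Real.exp (-y)) 1) := by
  have ha0 : 0 < a := lt_trans one_pos ha
  have key : ∀ y ∈ Set.Ioc (1:ℝ) (Real.log a / 2),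
      (1:ℝ≥0∞) ≤ ENNReal.ofReal (min (a * y ^ (κ - 1) * Real.exp (-y)) 1) := by
    intro y hy
    have hy1 : 1 ≤ y := le_of_lt hy.1
    have hy0 : 0 < y := lt_of_lt_of_le zero_lt_one hy1
    have hlogy : 0 ≤ Real.log y := Real.log_nonneg hy1
    have hylog : Real.log y ≤ y := (Real.log_le_sub_one_of_pos hy0).trans (by linarith)
    have hexp : (1:ℝ) ≤ a * y ^ (κ - 1) * Real.exp (-y) := by
      have h1 : Real.log y * (-1) ≤ Real.log y * (κ - 1) :=
        mul_le_mul_of_nonneg_left (by linarith) hlogy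
      have h2 : y ≤ Real.log a / 2 := hy.2
      have h0 : 0 ≤ Real.log a + Real.log y * (κ - 1) + -y := by nlinarith
      calc (1:ℝ) = Real.exp 0 := Real.exp_zero.symm
        _ ≤ Real.exp (Real.log a + Real.log y * (κ - 1) + -y) := Real.exp_le_exp.2 h0
        _ = a * y ^ (κ - 1) * Real.exp (-y) := by
            rw [Real.exp_add, Real.exp_add, Real.exp_log ha0, ← Real.rpow_def_of_pos hy0]
    rw [min_eq_right hexp, ENNReal.ofReal_one]
  calc ENNReal.ofReal (Real.log a / 2 - 1)
      = ∫⁻ _ in Set.Ioc (1:ℝ) (Real.log a / 2), (1:ℝ≥0∞) := by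
        rw [MeasureTheory.setLIntegral_one, Real.volume_Ioc]
    _ ≤ ∫⁻ y in Set.Ioc (1:ℝ) (Real.log a / 2),
          ENNReal.ofReal (min (a * y ^ (κ - 1) * Real.exp (-y)) 1) :=
        MeasureTheory.setLIntegral_mono' measurableSet_Ioc key
    _ ≤ ∫⁻ y in Set.Ioi (0:ℝ), ENNReal.ofReal (min (a * y ^ (κ - 1) * Real.exp (-y)) 1) :=
        MeasureTheory.lintegral_mono_set (fun y hy => lt_trans zero_lt_one hy.1)

lemma inner_upper (κ : ℝ) (hκ : 0 < κ) {a : ℝ} (ha : 1 < a) :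
    (∫⁻ y in Set.Ioi (0:ℝ), ENNReal.ofReal (min (a * y ^ (κ - 1) * Real.exp (-y)) 1)) ≤
      ENNReal.ofReal (2 * Real.log a + 2 + 2 * Real.exp (κ * (Real.log (2*κ) - 1))) := by
  set C := Real.exp (κ * (Real.log (2*κ) - 1)) with hC
  have hC0 : 0 < C := Real.exp_pos _
  have ha0 : 0 < a := lt_trans one_pos ha
  have hla : 0 < Real.log a := Real.log_pos ha
  set T := 2 * Real.log a + 2 with hT
  have hT1 : 1 ≤ T := by simp only [hT]; linarith
  have hT0 : (0:ℝ) ≤ T := by linarith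
  have htail_pt : ∀ y ∈ Set.Ioi T,
      ENNReal.ofReal (min (a * y ^ (κ - 1) * Real.exp (-y)) 1)
        ≤ ENNReal.ofReal (a * C * Real.exp (-(1/2) * y)) := by
    intro y hy
    have hy1 : 1 ≤ y := hT1.trans (le_of_lt hy)
    have hy0 : 0 < y := lt_of_lt_of_le zero_lt_one hy1
    have hrpow : y ^ (κ - 1) ≤ C * Real.exp ((1/2) * y) := by
      have h1 : y ^ (κ - 1) ≤ y ^ κ :=
        Real.rpow_le_rpow_of_exponent_le hy1 (by linarith)
      have h2 : Real.log (y / (2*κ)) ≤ y/(2*κ) - 1 :=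
        Real.log_le_sub_one_of_pos (by positivity)
      have h3 : Real.log (y/(2*κ)) = Real.log y - Real.log (2*κ) :=
        Real.log_div (ne_of_gt hy0) (by positivity)
      have h4 : κ * Real.log y ≤ (1/2)*y + κ * (Real.log (2*κ) - 1) := by
        rw [h3] at h2
        have h5 := mul_le_mul_of_nonneg_left h2 (le_of_lt hκ)
        have hk : κ * (y / (2*κ)) = y/2 := by field_simp
        nlinarith
      calc y ^ (κ - 1) ≤ y ^ κ := h1
        _ = Real.exp (Real.log y * κ) := Real.rpow_def_of_pos hy0 κ
        _ ≤ Real.exp ((1/2)*y + κ*(Real.log (2*κ) - 1)) := Real.exp_le_exp.2 (by linarith)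
        _ = C * Real.exp ((1/2)*y) := by rw [Real.exp_add]; ring
    apply ENNReal.ofReal_le_ofReal
    have hkey : Real.exp ((1/2) * y) * Real.exp (-y) = Real.exp (-(1/2) * y) := by
      rw [← Real.exp_add]; ring_nf
    calc min (a * y ^ (κ - 1) * Real.exp (-y)) 1
        ≤ a * y ^ (κ - 1) * Real.exp (-y) := min_le_left _ _
      _ ≤ a * (C * Real.exp ((1/2)*y)) * Real.exp (-y) :=
          mul_le_mul_of_nonneg_right
            (mul_le_mul_of_nonneg_left hrpow (le_of_lt ha0)) (Real.exp_nonneg _)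
      _ = a * C * (Real.exp ((1/2)*y) * Real.exp (-y)) := by ring
      _ = a * C * Real.exp (-(1/2) * y) := by rw [hkey]
  have hsplit : Set.Ioi (0:ℝ) = Set.Ioc 0 T ∪ Set.Ioi T :=
    (Set.Ioc_union_Ioi_eq_Ioi hT0).symm
  rw [hsplit, MeasureTheory.lintegral_union measurableSet_Ioi Set.Ioc_disjoint_Ioi_same]
  have hpart1 : (∫⁻ y in Set.Ioc (0:ℝ) T,
      ENNReal.ofReal (min (a * y ^ (κ - 1) * Real.exp (-y)) 1)) ≤ ENNReal.ofReal T := by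
    calc (∫⁻ y in Set.Ioc (0:ℝ) T,
        ENNReal.ofReal (min (a * y ^ (κ - 1) * Real.exp (-y)) 1))
        ≤ ∫⁻ _ in Set.Ioc (0:ℝ) T, (1:ℝ≥0∞) :=
          MeasureTheory.setLIntegral_mono' measurableSet_Ioc
            (fun y _ => ENNReal.ofReal_le_one.2 (min_le_right _ _))
      _ = ENNReal.ofReal T := by
          rw [MeasureTheory.setLIntegral_one, Real.volume_Ioc, sub_zero]
  have hE1 : Real.exp (-1 : ℝ) ≤ 1 := by
    calc Real.exp (-1 : ℝ) ≤ Real.exp 0 := Real.exp_le_exp.2 (by norm_num)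
      _ = 1 := Real.exp_zero
  have hpart2 : (∫⁻ y in Set.Ioi T,
      ENNReal.ofReal (min (a * y ^ (κ - 1) * Real.exp (-y)) 1)) ≤ ENNReal.ofReal (2*C) := by
    have hac : (0:ℝ) ≤ a * C := by positivity
    calc (∫⁻ y in Set.Ioi T, ENNReal.ofReal (min (a * y ^ (κ - 1) * Real.exp (-y)) 1))
        ≤ ∫⁻ y in Set.Ioi T, ENNReal.ofReal (a * C * Real.exp (-(1/2) * y)) :=
          MeasureTheory.setLIntegral_mono' measurableSet_Ioi htail_pt
      _ = ∫⁻ y in Set.Ioi T, ENNReal.ofReal (a * C) * ENNReal.ofReal (Real.exp (-(1/2) * y)) := by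
          simp_rw [ENNReal.ofReal_mul hac]
      _ = ENNReal.ofReal (a * C) * ENNReal.ofReal (2 * Real.exp (-(1/2) * T)) := by
          rw [MeasureTheory.lintegral_const_mul' _ _ ENNReal.ofReal_ne_top, tail_integral]
      _ = ENNReal.ofReal (a * C * (2 * Real.exp (-(1/2) * T))) :=
          (ENNReal.ofReal_mul hac).symm
      _ ≤ ENNReal.ofReal (2*C) := by
          apply ENNReal.ofReal_le_ofReal
          have hTe : Real.exp (-(1/2) * T) = a⁻¹ * Real.exp (-1 : ℝ) := by
            have : -(1/2) * T = -Real.log a + -1 := by rw [hT]; ring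
            rw [this, Real.exp_add, Real.exp_neg, Real.exp_log ha0]
          rw [hTe]
          have heq : a * C * (2 * (a⁻¹ * Real.exp (-1 : ℝ))) = 2 * C * Real.exp (-1 : ℝ) := by
            field_simp
          rw [heq]
          nlinarith
  calc (∫⁻ y in Set.Ioc (0:ℝ) T,
        ENNReal.ofReal (min (a * y ^ (κ - 1) * Real.exp (-y)) 1))
      + (∫⁻ y in Set.Ioi T, ENNReal.ofReal (min (a * y ^ (κ - 1) * Real.exp (-y)) 1))
      ≤ ENNReal.ofReal T + ENNReal.ofReal (2*C) := add_le_add hpart1 hpart2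
    _ = ENNReal.ofReal (T + 2*C) := (ENNReal.ofReal_add hT0 (by positivity)).symm
    _ = ENNReal.ofReal (2 * Real.log a + 2 + 2 * C) := by rw [hT]

end Stmt14Aux

theorem stmt14 (κ : ℝ) (hκ : 0 < κ) (lam : MeasureTheory.Measure ℝ)
    [MeasureTheory.SigmaFinite lam] (hlam0 : lam {0} = 0)
    (hlevy : (∫⁻ z, ENNReal.ofReal (min 1 (z ^ 2)) ∂lam) ≠ ⊤) :
    ((∫⁻ y in Set.Ioi (0:ℝ), ∫⁻ z in {z : ℝ | 1 < |z|},
        ENNReal.ofReal (min (|z| * y ^ (κ - 1) * Real.exp (-y)) 1) ∂lam) ≠ ⊤) ↔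
    ((∫⁻ z in {z : ℝ | 1 < |z|}, ENNReal.ofReal (Real.log |z|) ∂lam) ≠ ⊤) := by
  classical
  set S : Set ℝ := {z : ℝ | 1 < |z|} with hSdef
  have hS : MeasurableSet S := measurableSet_lt measurable_const (measurable_id.abs)
  -- λ S is finite
  have hMS : lam S ≠ ⊤ := by
    have h1 : lam S = ∫⁻ z in S, ENNReal.ofReal (min 1 (z ^ 2)) ∂lam := by
      rw [← MeasureTheory.setLIntegral_one]
      refine MeasureTheory.setLIntegral_congr_fun hS ?_
      intro z hz
      have hz1 : 1 < |z| := hz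
      have : (1:ℝ) ≤ z ^ 2 := by nlinarith [abs_nonneg z, sq_abs z]
      dsimp only
      rw [min_eq_left this, ENNReal.ofReal_one]
    have h2 : (∫⁻ z in S, ENNReal.ofReal (min 1 (z ^ 2)) ∂lam) ≤
        ∫⁻ z, ENNReal.ofReal (min 1 (z ^ 2)) ∂lam :=
      MeasureTheory.setLIntegral_le_lintegral _ _
    rw [h1]
    exact ne_top_of_le_ne_top hlevy h2
  -- measurability for Tonelli
  have hmeas : Measurable (Function.uncurry fun (y z : ℝ) =>
      ENNReal.ofReal (min (|z| * y ^ (κ - 1) * Real.exp (-y)) 1)) := by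
    apply Measurable.ennreal_ofReal
    apply Measurable.min _ measurable_const
    exact ((measurable_snd.abs.mul (measurable_fst.pow_const _)).mul
      (measurable_fst.neg.exp))
  have hswap := MeasureTheory.lintegral_lintegral_swap
    (μ := MeasureTheory.volume.restrict (Set.Ioi (0:ℝ))) (ν := lam.restrict S)
    hmeas.aemeasurable
  rw [hswap]
  set g : ℝ → ℝ≥0∞ := fun z => ∫⁻ y in Set.Ioi (0:ℝ),
      ENNReal.ofReal (min (|z| * y ^ (κ - 1) * Real.exp (-y)) 1) with hg
  constructor
  · intro h
    have hpt : ∀ z ∈ S, ENNReal.ofReal (Real.log |z|) ≤ 2 * g z + 2 := by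
      intro z hz
      have hz1 : 1 < |z| := hz
      have hlow := Stmt14Aux.inner_lower κ hκ hz1
      calc ENNReal.ofReal (Real.log |z|)
          = ENNReal.ofReal (2 * (Real.log |z| / 2 - 1) + 2) := by congr 1; ring
        _ ≤ ENNReal.ofReal (2 * (Real.log |z| / 2 - 1)) + ENNReal.ofReal 2 :=
            ENNReal.ofReal_add_le
        _ = 2 * ENNReal.ofReal (Real.log |z| / 2 - 1) + 2 := by
            rw [ENNReal.ofReal_mul (by norm_num : (0:ℝ) ≤ 2)]
            norm_num
        _ ≤ 2 * g z + 2 := by gcongr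
    have hint : (∫⁻ z in S, ENNReal.ofReal (Real.log |z|) ∂lam) ≤
        2 * (∫⁻ z in S, g z ∂lam) + 2 * lam S := by
      calc (∫⁻ z in S, ENNReal.ofReal (Real.log |z|) ∂lam)
          ≤ ∫⁻ z in S, (2 * g z + 2) ∂lam := MeasureTheory.setLIntegral_mono' hS hpt
        _ = 2 * (∫⁻ z in S, g z ∂lam) + 2 * lam S := by
            rw [MeasureTheory.lintegral_add_right _ measurable_const,
              MeasureTheory.lintegral_const_mul' _ _ (by norm_num : (2:ℝ≥0∞) ≠ ⊤),
              MeasureTheory.setLIntegral_const]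
    exact ne_top_of_le_ne_top
      (ENNReal.add_ne_top.2 ⟨ENNReal.mul_ne_top (by norm_num) h,
        ENNReal.mul_ne_top (by norm_num) hMS⟩) hint
  · intro h
    set c : ℝ := 2 + 2 * Real.exp (κ * (Real.log (2*κ) - 1)) with hc
    have hpt : ∀ z ∈ S, g z ≤ 2 * ENNReal.ofReal (Real.log |z|) + ENNReal.ofReal c := by
      intro z hz
      have hz1 : 1 < |z| := hz
      have hup := Stmt14Aux.inner_upper κ hκ hz1
      calc g z
          ≤ ENNReal.ofReal (2 * Real.log |z| + 2 +
              2 * Real.exp (κ * (Real.log (2*κ) - 1))) := hup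
        _ = ENNReal.ofReal (2 * Real.log |z| + c) := by rw [hc]; congr 1; ring
        _ ≤ ENNReal.ofReal (2 * Real.log |z|) + ENNReal.ofReal c := ENNReal.ofReal_add_le
        _ = 2 * ENNReal.ofReal (Real.log |z|) + ENNReal.ofReal c := by
            rw [ENNReal.ofReal_mul (by norm_num : (0:ℝ) ≤ 2)]
            norm_num
    have hint : (∫⁻ z in S, g z ∂lam) ≤
        2 * (∫⁻ z in S, ENNReal.ofReal (Real.log |z|) ∂lam) + ENNReal.ofReal c * lam S := by
      calc (∫⁻ z in S, g z ∂lam)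
          ≤ ∫⁻ z in S, (2 * ENNReal.ofReal (Real.log |z|) + ENNReal.ofReal c) ∂lam :=
            MeasureTheory.setLIntegral_mono' hS hpt
        _ = _ := by
            rw [MeasureTheory.lintegral_add_right _ measurable_const,
              MeasureTheory.lintegral_const_mul' _ _ (by norm_num : (2:ℝ≥0∞) ≠ ⊤),
              MeasureTheory.setLIntegral_const]
    exact ne_top_of_le_ne_top
      (ENNReal.add_ne_top.2 ⟨ENNReal.mul_ne_top (by norm_num) h,
        ENNReal.mul_ne_top ENNReal.ofReal_ne_top hMS⟩) hint
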